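/- Let R be a nonzero complex polynomial and let n > 1, s > 0 be integers. If the polynomial X^s·R(X^n) is linearly equivalent to a power, i.e., there exist an integer N ≥ 1 and polynomials μ, ν of degree one such that X^s·R(X^n) = μ∘X^N∘ν, then R is a monomial: R = c·X^t for some c ∈ ℂ, c ≠ 0, and integer t ≥ 0. -/

import Mathlib

open Polynomial

theorem stmt_15 (R : Polynomial ℂ) (hR : R ≠ 0) (n s : ℕ) (hn : 1 < n) (hs : 0 < s)
    (h : ∃ (N : ℕ) (μ ν : Polynomial ℂ), 1 ≤ N ∧ μ.natDegree = 1 ∧ ν.natDegree = 1 ∧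
      X ^ s * R.comp (X ^ n) = μ.comp ((X ^ N : Polynomial ℂ).comp ν)) :
    ∃ (c : ℂ) (t : ℕ), c ≠ 0 ∧ R = C c * X ^ t := by
  obtain ⟨N, μ, ν, hN, hμ, hν, heq⟩ := h
  obtain ⟨a, ha, b, rfl⟩ := natDegree_eq_one.mp hμ
  obtain ⟨u, hu, v, rfl⟩ := natDegree_eq_one.mp hν
  set L : Polynomial ℂ := C u * X + C v with hL
  have heq' : X ^ s * R.comp (X ^ n) = C a * L ^ N + C b := by
    rw [heq]; simp [X_pow_comp, add_comp, mul_comp, C_comp, X_comp]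
  -- the comp of R with X^n is nonzero
  have hcomp_ne : R.comp (X ^ n) ≠ 0 := by
    intro h0
    rcases comp_eq_zero_iff.mp h0 with h1 | ⟨_, h2⟩
    · exact hR h1
    · have := congrArg natDegree h2
      rw [natDegree_X_pow, natDegree_C] at this
      omega
  set Q : Polynomial ℂ := C (s : ℂ) * R + C (n : ℂ) * (X * derivative R) with hQ
  -- derivative of the LHS
  have hds : X ^ (s - 1) * Q.comp (X ^ n) = derivative (X ^ s * R.comp (X ^ n)) := by
    rw [derivative_mul, derivative_comp, derivative_X_pow, derivative_X_pow]
    have h2 : (X : Polynomial ℂ) ^ (s - 1) * X ^ n = X ^ s * X ^ (n - 1) := by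
      rw [← pow_add, ← pow_add]; congr 1; omega
    calc X ^ (s - 1) * Q.comp (X ^ n)
        = C (s : ℂ) * X ^ (s - 1) * R.comp (X ^ n)
          + C (n : ℂ) * ((X ^ (s - 1) * X ^ n) * (derivative R).comp (X ^ n)) := by
          simp only [hQ, add_comp, mul_comp, C_comp, X_comp]; ring
      _ = C (s : ℂ) * X ^ (s - 1) * R.comp (X ^ n)
          + C (n : ℂ) * ((X ^ s * X ^ (n - 1)) * (derivative R).comp (X ^ n)) := by rw [h2]
      _ = C (↑s : ℂ) * X ^ (s - 1) * R.comp (X ^ n)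
          + X ^ s * (C (↑n : ℂ) * X ^ (n - 1) * (derivative R).comp (X ^ n)) := by ring
  -- derivative of the RHS
  have hderR : derivative (C a * L ^ N + C b) = C (a * N * u) * L ^ (N - 1) := by
    have hdL : derivative L = C u := by simp [hL]
    rw [derivative_add, derivative_C, derivative_mul, derivative_C, derivative_pow, hdL]
    simp only [map_mul]; ring
  have hder : X ^ (s - 1) * Q.comp (X ^ n) = C (a * N * u) * L ^ (N - 1) := by
    rw [hds, heq', hderR]
  rcases eq_or_lt_of_le hN with hN1 | hN2
  · -- case N = 1 : degree considerations
    subst hN1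
    have hdeg : (X ^ s * R.comp (X ^ n)).natDegree = s + R.natDegree * n := by
      rw [natDegree_mul (pow_ne_zero _ X_ne_zero) hcomp_ne, natDegree_X_pow,
        natDegree_comp, natDegree_X_pow]
    have hrhs : C a * L ^ 1 + C b = C (a * u) * X + C (a * v + b) := by
      simp [hL, map_mul, map_add]; ring
    have hdeg1 : (X ^ s * R.comp (X ^ n)).natDegree = 1 := by
      rw [heq', hrhs, natDegree_linear (mul_ne_zero ha hu)]
    have h4 : s + R.natDegree * n = 1 := by rw [← hdeg, hdeg1]
    have hR0 : R.natDegree = 0 := by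
      rcases Nat.eq_zero_or_pos R.natDegree with h0 | hpos
      · exact h0
      · have : n ≤ R.natDegree * n := Nat.le_mul_of_pos_left n hpos
        omega
    obtain ⟨c, hc⟩ := natDegree_eq_zero.mp hR0
    refine ⟨c, 0, ?_, ?_⟩
    · intro h0; rw [h0, map_zero] at hc; exact hR hc.symm
    · rw [← hc]; simp
  · -- case N ≥ 2
    have hNc : (N : ℂ) ≠ 0 := Nat.cast_ne_zero.mpr (by omega)
    have he : a * (N : ℂ) * u ≠ 0 := mul_ne_zero (mul_ne_zero ha hNc) hu
    have hLdeg : L.natDegree = 1 := natDegree_linear hu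
    have hLne : L ≠ 0 := by intro h0; rw [h0, natDegree_zero] at hLdeg; omega
    have hQne : Q ≠ 0 := by
      intro h0
      rw [h0, zero_comp, mul_zero] at hder
      exact (mul_ne_zero (C_ne_zero.mpr he) (pow_ne_zero _ hLne)) hder.symm
    -- roots of Q ∘ X^n are roots of L
    have hroot : ∀ z : ℂ, Q.eval (z ^ n) = 0 → u * z + v = 0 := by
      intro z hz
      have h1 := congrArg (eval z) hder
      simp only [eval_mul, eval_comp, eval_pow, eval_X, eval_C, eval_add, hz, mul_zero, hL] at h1
      have h2 : (u * z + v) ^ (N - 1) = 0 := by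
        rcases mul_eq_zero.mp h1.symm with h | h
        · exact absurd h he
        · exact h
      exact pow_eq_zero_iff (by omega : N - 1 ≠ 0) |>.mp h2
    -- hence every root of Q is zero
    have hzero : ∀ α : ℂ, Q.eval α = 0 → α = 0 := by
      intro α hα
      by_contra hα0
      obtain ⟨z, hz⟩ := IsAlgClosed.exists_pow_nat_eq α (by omega : 0 < n)
      have hz0 : z ≠ 0 := by
        intro h0; rw [h0, zero_pow (by omega : n ≠ 0)] at hz; exact hα0 hz.symm
      have hζ := Complex.isPrimitiveRoot_exp n (by omega)
      set ζ := Complex.exp (2 * Real.pi * Complex.I / n) with hζdef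
      have h1 : u * z + v = 0 := hroot z (by rw [hz]; exact hα)
      have h2 : u * (ζ * z) + v = 0 := by
        refine hroot (ζ * z) ?_
        rw [mul_pow, hζ.pow_eq_one, one_mul, hz]; exact hα
      have h3 : u * z * (ζ - 1) = 0 := by linear_combination h2 - h1
      have hζ1 : ζ ≠ 1 := hζ.ne_one hn
      rcases mul_eq_zero.mp h3 with h | h
      · exact (mul_ne_zero hu hz0) h
      · exact hζ1 (by linear_combination h)
    -- Q is a monomial
    have hsplits : Q.Splits := IsAlgClosed.splits Q
    have hcard : Multiset.card Q.roots = Q.natDegree := by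
      have := hsplits.natDegree_eq_card_roots
      exact this.symm
    have hrts : Q.roots = Multiset.replicate Q.natDegree 0 := by
      refine Multiset.eq_replicate.mpr ⟨hcard, fun b hb => ?_⟩
      exact hzero b ((mem_roots hQne).mp hb)
    have hQeq : Q = C Q.leadingCoeff * X ^ Q.natDegree := by
      conv_lhs => rw [← C_leadingCoeff_mul_prod_multiset_X_sub_C hcard]
      rw [hrts]
      simp [Multiset.map_replicate, Multiset.prod_replicate]
    set m := Q.natDegree with hm
    have hd : Q.leadingCoeff ≠ 0 := leadingCoeff_ne_zero.mpr hQne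
    -- coefficients of Q
    have hco : ∀ k : ℕ, Q.coeff k = ((s : ℂ) + n * k) * R.coeff k := by
      intro k
      cases k with
      | zero => simp [hQ, mul_coeff_zero]
      | succ j =>
        simp only [hQ, coeff_add, coeff_C_mul, coeff_X_mul, coeff_derivative]
        push_cast
        ring
    have hnk : ∀ k : ℕ, ((s : ℂ) + n * k) ≠ 0 := by
      intro k
      have : ((s + n * k : ℕ) : ℂ) ≠ 0 := Nat.cast_ne_zero.mpr (by omega)
      push_cast at this
      exact this
    have hcoeff0 : ∀ k : ℕ, k ≠ m → R.coeff k = 0 := by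
      intro k hk
      have h1 := hco k
      rw [hQeq, coeff_C_mul, coeff_X_pow, if_neg hk, mul_zero] at h1
      rcases mul_eq_zero.mp h1.symm with h | h
      · exact absurd h (hnk k)
      · exact h
    have hmc : R.coeff m ≠ 0 := by
      intro h0
      have h1 := hco m
      rw [hQeq, coeff_C_mul, coeff_X_pow, if_pos rfl, mul_one, h0, mul_zero] at h1
      exact hd h1
    refine ⟨R.coeff m, m, hmc, ?_⟩
    ext k
    by_cases hk : k = m
    · subst hk; simp [coeff_C_mul, coeff_X_pow]
    · simp [coeff_C_mul, coeff_X_pow, hk, hcoeff0 k hk]
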